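/- arXiv:2309.11074 — 4 statements merged into one kernel-verified Lean document; each statement's English description precedes it below -/
import Mathlib

section
/- The 2×2 real matrix T = [[-1, 2], [0, -1]] is Cesàro bounded but not power bounded (with respect to the operator norm on 2×2 matrices). -/
open Finset Matrix

noncomputable section

private def Amat : Matrix (Fin 2) (Fin 2) ℝ := !![(-1 : ℝ), 2; 0, -1]

private lemma pow_formula (n : ℕ) :
    Amat ^ n = ((-1 : ℝ) ^ n) • !![(1 : ℝ), -2 * n; 0, 1] := by
  induction n with
  | zero => simp [Amat]; ext i j; fin_cases i <;> fin_cases j <;> simp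
  | succ n ih =>
      rw [pow_succ, ih, smul_mul_assoc]
      ext i j
      fin_cases i <;> fin_cases j <;>
        simp [Amat, Matrix.mul_apply, Fin.sum_univ_two, pow_succ] <;> ring

private lemma sum_formula (n : ℕ) :
    ∑ k ∈ Finset.range n, Amat ^ k =
      if Even n then !![(0 : ℝ), n; 0, 0] else !![(1 : ℝ), -((n : ℝ) - 1); 0, 1] := by
  induction n with
  | zero => simp [show (0:Matrix (Fin 2) (Fin 2) ℝ) = !![0,0;0,0] by ext i j; fin_cases i <;> fin_cases j <;> simp]
  | succ n ih =>
      rw [Finset.sum_range_succ, ih, pow_formula]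
      rcases Nat.even_or_odd n with h | h
      · rw [if_pos h, if_neg (by simp [Nat.even_add_one, h]), h.neg_one_pow, one_smul]
        ext i j
        fin_cases i <;> fin_cases j <;> simp <;> push_cast <;> ring
      · rw [if_neg (by simp [Nat.not_even_iff_odd.2 h]), if_pos (by simp [Nat.even_add_one, Nat.not_even_iff_odd.2 h]),
          h.neg_one_pow]
        ext i j
        fin_cases i <;> fin_cases j <;> simp <;> push_cast <;> ring

private lemma opNorm_le_of_entries (M : Matrix (Fin 2) (Fin 2) ℝ) (c : ℝ)
    (h : ∀ i j, |M i j| ≤ c) :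
    ‖Matrix.toEuclideanCLM (𝕜 := ℝ) M‖ ≤ 2 * c := by
  have hc : 0 ≤ c := le_trans (abs_nonneg _) (h 0 0)
  apply ContinuousLinearMap.opNorm_le_bound _ (by positivity)
  intro x
  have hy := Matrix.ofLp_toEuclideanCLM (𝕜 := ℝ) M x
  have hy0 : (Matrix.toEuclideanCLM (𝕜 := ℝ) M x) 0 = M 0 0 * x 0 + M 0 1 * x 1 := by
    have := congrFun hy 0
    simpa [Matrix.toLin'_apply, Matrix.mulVec, dotProduct, Fin.sum_univ_two] using this
  have hy1 : (Matrix.toEuclideanCLM (𝕜 := ℝ) M x) 1 = M 1 0 * x 0 + M 1 1 * x 1 := by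
    have := congrFun hy 1
    simpa [Matrix.toLin'_apply, Matrix.mulVec, dotProduct, Fin.sum_univ_two] using this
  have hx : ‖x‖ = Real.sqrt (x 0 ^ 2 + x 1 ^ 2) := by
    rw [EuclideanSpace.norm_eq, Fin.sum_univ_two]
    simp [Real.norm_eq_abs, sq_abs]
  have hxs : ‖x‖ ^ 2 = x 0 ^ 2 + x 1 ^ 2 := by
    rw [hx, Real.sq_sqrt (by positivity)]
  have hN : ‖Matrix.toEuclideanCLM (𝕜 := ℝ) M x‖ =
      Real.sqrt ((M 0 0 * x 0 + M 0 1 * x 1) ^ 2 + (M 1 0 * x 0 + M 1 1 * x 1) ^ 2) := by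
    rw [EuclideanSpace.norm_eq, Fin.sum_univ_two, hy0, hy1]
    simp [Real.norm_eq_abs, sq_abs]
  rw [hN]
  have e00 : M 0 0 ^ 2 ≤ c ^ 2 := by nlinarith [h 0 0, sq_abs (M 0 0), abs_nonneg (M 0 0)]
  have e01 : M 0 1 ^ 2 ≤ c ^ 2 := by nlinarith [h 0 1, sq_abs (M 0 1), abs_nonneg (M 0 1)]
  have e10 : M 1 0 ^ 2 ≤ c ^ 2 := by nlinarith [h 1 0, sq_abs (M 1 0), abs_nonneg (M 1 0)]
  have e11 : M 1 1 ^ 2 ≤ c ^ 2 := by nlinarith [h 1 1, sq_abs (M 1 1), abs_nonneg (M 1 1)]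
  calc Real.sqrt ((M 0 0 * x 0 + M 0 1 * x 1) ^ 2 + (M 1 0 * x 0 + M 1 1 * x 1) ^ 2)
      ≤ Real.sqrt ((2 * c * ‖x‖) ^ 2) := by
        apply Real.sqrt_le_sqrt
        nlinarith [sq_nonneg (M 0 0 * x 0 - M 0 1 * x 1), sq_nonneg (M 1 0 * x 0 - M 1 1 * x 1),
          sq_nonneg (x 0), sq_nonneg (x 1), hxs]
    _ = 2 * c * ‖x‖ := Real.sqrt_sq (by positivity)

/-- The Assani matrix `[[-1, 2], [0, -1]]`, viewed as an operator on Euclidean `ℝ²`,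
is Cesàro bounded but not power bounded (operator norm). -/
theorem stmt_2 :
    (∃ C : ℝ, ∀ n : ℕ,
      ‖((n : ℝ)⁻¹) • ∑ k ∈ Finset.range n,
          (Matrix.toEuclideanCLM (𝕜 := ℝ) (!![(-1 : ℝ), 2; 0, -1])) ^ k‖ ≤ C) ∧
    ¬ (∃ C : ℝ, ∀ n : ℕ,
      ‖(Matrix.toEuclideanCLM (𝕜 := ℝ) (!![(-1 : ℝ), 2; 0, -1])) ^ n‖ ≤ C) := by
  constructor
  · refine ⟨2, fun n => ?_⟩
    have key : ((n : ℝ)⁻¹) • ∑ k ∈ Finset.range n,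
        (Matrix.toEuclideanCLM (𝕜 := ℝ) (!![(-1 : ℝ), 2; 0, -1])) ^ k =
        Matrix.toEuclideanCLM (𝕜 := ℝ) (((n : ℝ)⁻¹) • ∑ k ∈ Finset.range n, Amat ^ k) := by
      rw [_root_.map_smul, map_sum]
      simp_rw [map_pow]
      rfl
    rw [key]
    have := opNorm_le_of_entries (((n : ℝ)⁻¹) • ∑ k ∈ Finset.range n, Amat ^ k) 1 ?_
    · linarith
    intro i j
    rw [sum_formula]
    rcases Nat.even_or_odd n with h | h
    · rw [if_pos h]
      rcases Nat.eq_zero_or_pos n with rfl | hn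
      · fin_cases i <;> fin_cases j <;> norm_num
      · have hn1 : (1 : ℝ) ≤ n := by exact_mod_cast hn
        fin_cases i <;> fin_cases j <;>
          simp [abs_mul, abs_inv, abs_of_nonneg (by positivity : (0:ℝ) ≤ (n:ℝ))] <;>
          rw [inv_mul_cancel₀ (by positivity)]
    · rw [if_neg (Nat.not_even_iff_odd.2 h)]
      have hn : 0 < n := h.pos
      have hn1 : (1 : ℝ) ≤ n := by exact_mod_cast hn
      fin_cases i <;> fin_cases j <;> simp [abs_mul, abs_inv] <;>
        first
        | exact inv_le_one_of_one_le₀ hn1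
        | · rw [abs_of_nonpos (by linarith)]
            calc (↑n)⁻¹ * -(1 - (n:ℝ)) ≤ (↑n)⁻¹ * ↑n := by
                  apply mul_le_mul_of_nonneg_left (by linarith) (by positivity)
              _ = 1 := inv_mul_cancel₀ (by positivity)
  · rintro ⟨C, hC⟩
    set n : ℕ := ⌈C⌉₊ + 1 with hn
    have h1 := hC n
    set e : EuclideanSpace ℝ (Fin 2) := (WithLp.equiv 2 (Fin 2 → ℝ)).symm ![0, 1] with he
    have hen : ‖e‖ = 1 := by
      rw [EuclideanSpace.norm_eq, Fin.sum_univ_two]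
      norm_num [he]
    have happ : ((Matrix.toEuclideanCLM (𝕜 := ℝ) (!![(-1 : ℝ), 2; 0, -1])) ^ n) e =
        (WithLp.equiv 2 (Fin 2 → ℝ)).symm (((-1 : ℝ) ^ n) • ![(-2 * n : ℝ), 1]) := by
      rw [← map_pow, he, WithLp.equiv_symm_apply, Matrix.toEuclideanCLM_toLp]
      congr 1
      rw [show (!![(-1 : ℝ), 2; 0, -1] : Matrix (Fin 2) (Fin 2) ℝ) = Amat from rfl,
        pow_formula, Matrix.smul_mulVec]
      congr 1
      funext i
      fin_cases i <;> simp [Matrix.mulVec, dotProduct, Fin.sum_univ_two]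
    have hlow : (2 * n : ℝ) ≤ ‖((Matrix.toEuclideanCLM (𝕜 := ℝ) (!![(-1 : ℝ), 2; 0, -1])) ^ n) e‖ := by
      rw [happ, EuclideanSpace.norm_eq, Fin.sum_univ_two]
      have : ∀ i : Fin 2, ((WithLp.equiv 2 (Fin 2 → ℝ)).symm (((-1 : ℝ) ^ n) • ![(-2 * n : ℝ), 1])) i
          = ((-1 : ℝ) ^ n) * (![(-2 * n : ℝ), 1] i) := fun i => rfl
      rw [this 0, this 1]
      have h2 : ((-1 : ℝ) ^ n) ^ 2 = 1 := by
        rcases Nat.even_or_odd n with h | h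
        · rw [h.neg_one_pow]; norm_num
        · rw [h.neg_one_pow]; norm_num
      calc (2 * n : ℝ) = Real.sqrt ((2 * n) ^ 2) := (Real.sqrt_sq (by positivity)).symm
        _ ≤ _ := by
            apply Real.sqrt_le_sqrt
            simp only [Real.norm_eq_abs, sq_abs, mul_pow, h2, Matrix.cons_val_zero, Matrix.cons_val_one, Matrix.head_cons]
            nlinarith [sq_nonneg ((n : ℝ))]
    have hup : ‖((Matrix.toEuclideanCLM (𝕜 := ℝ) (!![(-1 : ℝ), 2; 0, -1])) ^ n) e‖ ≤ C := by
      calc _ ≤ ‖(Matrix.toEuclideanCLM (𝕜 := ℝ) (!![(-1 : ℝ), 2; 0, -1])) ^ n‖ * ‖e‖ :=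
            ContinuousLinearMap.le_opNorm _ _
        _ ≤ C := by rw [hen, mul_one]; exact h1
    have hC' : C ≤ ⌈C⌉₊ := Nat.le_ceil C
    have : (2 * n : ℝ) ≤ C := le_trans hlow hup
    have hnn : (n : ℝ) = (⌈C⌉₊ : ℝ) + 1 := by rw [hn]; push_cast; ring
    nlinarith [(Nat.cast_nonneg ⌈C⌉₊ : (0:ℝ) ≤ ⌈C⌉₊)]
end
end

section
/- Let G be a locally compact group that is not discrete, with left Haar measure λ. Then G contains a compact subset E which is nowhere dense and satisfies λ(E) > 0. -/
open MeasureTheory Set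
open scoped Pointwise

section AuxStmt4

variable {G : Type*} [Group G] [TopologicalSpace G] [IsTopologicalGroup G]
    [LocallyCompactSpace G] [T2Space G] [MeasurableSpace G] [BorelSpace G]

/-- Small symmetric compact neighborhoods of `1` inside a given neighborhood, with small
measure, for an outer regular atomless measure. -/
lemma stmt4_aux_shrink (ν : Measure G) [ν.OuterRegular] [NullSingletonClass ν]
    {U : Set G} (hU : U ∈ nhds (1 : G)) {ε : ENNReal} (hε : 0 < ε) :
    ∃ V : Set G, IsCompact V ∧ V ∈ nhds (1 : G) ∧ V⁻¹ = V ∧ V * V ⊆ U ∧ ν V < ε := by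
  obtain ⟨K₀, hK₀c, hK₀n⟩ := exists_compact_mem_nhds (1 : G)
  have h1 : ν ({1} : Set G) < ε := by simpa using hε
  obtain ⟨O, hOsup, hOopen, hOsmall⟩ := Set.exists_isOpen_lt_of_lt _ _ h1
  have hOn : O ∈ nhds (1 : G) := hOopen.mem_nhds (hOsup rfl)
  obtain ⟨V₁, hV₁n, hV₁c, hV₁sym, hV₁mul⟩ :=
    exists_closed_nhds_one_inv_eq_mul_subset (Filter.inter_mem hU hOn)
  have hV₁sub : V₁ ⊆ U ∩ O := by
    refine (subset_mul_left V₁ (mem_of_mem_nhds hV₁n)).trans hV₁mul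
  refine ⟨V₁ ∩ (K₀ ∩ K₀⁻¹), ?_, ?_, ?_, ?_, ?_⟩
  · exact (hK₀c.inter (hK₀c.inv)).inter_left hV₁c
  · exact Filter.inter_mem hV₁n (Filter.inter_mem hK₀n (inv_mem_nhds_one G hK₀n))
  · have hsymm : ∀ y : G, y ∈ V₁ → y⁻¹ ∈ V₁ := fun y hy => by
      rw [← hV₁sym]; exact Set.inv_mem_inv.2 hy
    ext x
    simp only [Set.mem_inv, Set.mem_inter_iff, inv_inv]
    constructor
    · rintro ⟨h1, h2, h3⟩
      exact ⟨by simpa using hsymm _ h1, h3, h2⟩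
    · rintro ⟨h1, h2, h3⟩
      exact ⟨hsymm _ h1, h3, h2⟩
  · refine (Set.mul_subset_mul Set.inter_subset_left Set.inter_subset_left).trans
      (hV₁mul.trans Set.inter_subset_left)
  · refine lt_of_le_of_lt (measure_mono ?_) hOsmall
    exact Set.inter_subset_left.trans (hV₁sub.trans Set.inter_subset_right)

end AuxStmt4

/-- A non-discrete locally compact group possesses a compact nowhere dense subset of
positive Haar measure. -/
theorem stmt_4 {G : Type*} [Group G] [TopologicalSpace G] [IsTopologicalGroup G]
    [LocallyCompactSpace G] [T2Space G] [MeasurableSpace G] [BorelSpace G]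
    (μ : Measure G) [μ.IsHaarMeasure] (h : ¬ DiscreteTopology G) :
    ∃ E : Set G, IsCompact E ∧ IsNowhereDense E ∧ 0 < μ E := by
  classical
  -- the identity is not isolated
  haveI hpn : (nhdsWithin (1 : G) {(1 : G)}ᶜ).NeBot := by
    rw [Filter.neBot_iff]
    intro hbot
    exact h (discreteTopology_iff_isOpen_singleton_one.mpr
      ((isOpen_singleton_iff_punctured_nhds (1 : G)).mpr hbot))
  -- work with the (regular) Haar measure `ν`
  set ν : Measure G := Measure.haar with hνdef
  -- construct a decreasing sequence of small symmetric compact neighborhoods of 1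
  have step : ∀ (p : {V : Set G // IsCompact V ∧ V ∈ nhds (1 : G) ∧ V⁻¹ = V}) (n : ℕ),
      ∃ q : {V : Set G // IsCompact V ∧ V ∈ nhds (1 : G) ∧ V⁻¹ = V},
        q.1 * q.1 ⊆ p.1 ∧ ν q.1 < 2⁻¹ ^ n := by
    intro p n
    have hε : (0 : ENNReal) < 2⁻¹ ^ n :=
      ENNReal.pow_pos (ENNReal.inv_pos.mpr (by norm_num)) n
    obtain ⟨V, hc, hn, hs, hm, hsmall⟩ := stmt4_aux_shrink ν p.2.2.1 hε
    exact ⟨⟨V, hc, hn, hs⟩, hm, hsmall⟩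
  choose step' hstep1 hstep2 using step
  obtain ⟨V₀, hV₀c, hV₀n, hV₀s, -, -⟩ :=
    stmt4_aux_shrink ν (Filter.univ_mem (f := nhds (1 : G))) (ε := 1) zero_lt_one
  let Vseq : ℕ → {V : Set G // IsCompact V ∧ V ∈ nhds (1 : G) ∧ V⁻¹ = V} :=
    fun n => Nat.rec ⟨V₀, hV₀c, hV₀n, hV₀s⟩ (fun n p => step' p n) n
  let V : ℕ → Set G := fun n => (Vseq n).1
  have hVc : ∀ n, IsCompact (V n) := fun n => (Vseq n).2.1
  have hVn : ∀ n, V n ∈ nhds (1 : G) := fun n => (Vseq n).2.2.1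
  have hVsym : ∀ n, (V n)⁻¹ = V n := fun n => (Vseq n).2.2.2
  have hVmul : ∀ n, V (n + 1) * V (n + 1) ⊆ V n := fun n => hstep1 (Vseq n) n
  have hVsmall : ∀ n, ν (V (n + 1)) < 2⁻¹ ^ n := fun n => hstep2 (Vseq n) n
  have hV1 : ∀ n, (1 : G) ∈ V n := fun n => mem_of_mem_nhds (hVn n)
  have hVsub : ∀ n, V (n + 1) ⊆ V n := by
    intro n x hx
    have := Set.mul_mem_mul hx (hV1 (n + 1))
    rw [mul_one] at this
    exact hVmul n this
  have hVanti : Antitone V := antitone_nat_of_succ_le hVsub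
  -- the compact null subgroup H
  set H : Set G := ⋂ n, V n with hHdef
  have hHsub : ∀ n, H ⊆ V n := fun n => Set.iInter_subset _ n
  have hH1 : (1 : G) ∈ H := Set.mem_iInter.2 hV1
  have hHc : IsCompact H :=
    (hVc 0).of_isClosed_subset (isClosed_iInter fun n => (hVc n).isClosed) (hHsub 0)
  have hHmul : ∀ x ∈ H, ∀ y ∈ H, x * y ∈ H := by
    intro x hx y hy
    refine Set.mem_iInter.2 fun n => hVmul n
      (Set.mul_mem_mul (Set.mem_iInter.1 hx (n + 1)) (Set.mem_iInter.1 hy (n + 1)))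
  have hHinv : ∀ x ∈ H, x⁻¹ ∈ H := by
    intro x hx
    refine Set.mem_iInter.2 fun n => ?_
    rw [← hVsym n]
    exact Set.inv_mem_inv.2 (Set.mem_iInter.1 hx n)
  have hH0 : ν H = 0 := by
    by_contra h0
    obtain ⟨n, hn⟩ := ENNReal.exists_inv_two_pow_lt h0
    exact absurd ((measure_mono (hHsub (n + 1))).trans_lt (hVsmall n)) (not_lt.mpr hn.le)
  -- nested compact neighborhoods: any open set containing H contains some V m
  have hnested : ∀ {O : Set G}, IsOpen O → H ⊆ O → ∃ m, V m ⊆ O := by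
    intro O hO hHO
    have hdir : Directed (fun x1 x2 => x1 ⊇ x2) (fun n => V n ∩ Oᶜ) := by
      intro a b
      exact ⟨max a b,
        Set.inter_subset_inter_left _ (hVanti (le_max_left a b)),
        Set.inter_subset_inter_left _ (hVanti (le_max_right a b))⟩
    have hempty : V 0 ∩ ⋂ n, (V n ∩ Oᶜ) = ∅ := by
      have hiI : ⋂ n, (V n ∩ Oᶜ) = H ∩ Oᶜ := by
        rw [hHdef, Set.iInter_inter]
      rw [hiI]
      exact Set.eq_empty_iff_forall_notMem.2 fun x hx => hx.2.2 (hHO hx.2.1)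
    obtain ⟨m, hm⟩ := (hVc 0).elim_directed_family_closed (fun n => V n ∩ Oᶜ)
      (fun n => ((hVc n).isClosed.inter hO.isClosed_compl)) hempty hdir
    refine ⟨m, fun x hx => ?_⟩
    by_contra hxO
    exact Set.eq_empty_iff_forall_notMem.1 hm x ⟨hVanti (Nat.zero_le m) hx, hx, hxO⟩
  -- the saturated compact base set K
  set K : Set G := V 1 * H with hKdef
  have hKc : IsCompact K := (hVc 1).mul hHc
  have hKs : ∀ x ∈ K, ∀ h' ∈ H, x * h' ∈ K := by
    rintro x hx h' hh'
    obtain ⟨v, hv, w, hw, rfl⟩ := hx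
    rw [mul_assoc]
    exact Set.mul_mem_mul hv (hHmul w hw h' hh')
  have hKpos : 0 < ν K := by
    have h1 : (0 : ENNReal) < ν (interior (V 1)) :=
      IsOpen.measure_pos ν isOpen_interior ⟨1, mem_interior_iff_mem_nhds.2 (hVn 1)⟩
    refine h1.trans_le (measure_mono ((interior_subset).trans (subset_mul_left (V 1) hH1)))
  have hKfin : ν K ≠ ⊤ := hKc.measure_lt_top.ne
  -- finite covers of K by translates of interior (V n)
  have cov : ∀ n : ℕ, ∃ t : Finset G, K ⊆ ⋃ f ∈ t, f • interior (V n) := by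
    intro n
    obtain ⟨t, -, ht⟩ := hKc.elim_nhds_subcover (fun x => x • interior (V n))
      (fun x _ => (isOpen_interior.smul x).mem_nhds
        (Set.mem_smul_set.2 ⟨1, mem_interior_iff_mem_nhds.2 (hVn n), by simp⟩))
    exact ⟨t, ht⟩
  choose F hF using cov
  set c : ENNReal := ν K / 2 with hcdef
  have hc0 : c ≠ 0 := by
    simp only [hcdef, ne_eq, ENNReal.div_eq_zero_iff]
    push_neg
    exact ⟨hKpos.ne', by norm_num⟩
  -- small saturated open sets to remove
  have rem : ∀ (n : ℕ) (f : G), ∃ Wnf : Set G, IsOpen Wnf ∧ f ∈ Wnf ∧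
      (∀ x ∈ Wnf, ∀ h' ∈ H, x * h' ∈ Wnf) ∧
      ν Wnf < c * 2⁻¹ ^ (n + 1) / ((F n).card + 1) := by
    intro n f
    have hδ : 0 < c * 2⁻¹ ^ (n + 1) / ((F n).card + 1) := by
      refine ENNReal.div_pos ?_ ?_
      · exact mul_ne_zero hc0 (pow_ne_zero _ (by norm_num))
      · exact ENNReal.add_ne_top.2 ⟨ENNReal.natCast_ne_top _, ENNReal.one_ne_top⟩
    have hfH : ν (f • H) = 0 := by
      have hpre : f • H = (fun x => f⁻¹ * x) ⁻¹' H := by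
        ext x
        rw [Set.mem_smul_set_iff_inv_smul_mem]
        simp [smul_eq_mul]
      rw [hpre]
      rw [measure_preimage_mul ν f⁻¹ H]
      exact hH0
    obtain ⟨O, hOsup, hOopen, hOsmall⟩ :=
      Set.exists_isOpen_lt_of_lt (f • H) _ (by rw [hfH]; exact hδ)
    have hHsubO : H ⊆ f⁻¹ • O := by
      intro x hx
      rw [Set.mem_smul_set_iff_inv_smul_mem, inv_inv]
      exact hOsup (Set.smul_mem_smul_set hx)
    obtain ⟨m, hm⟩ := hnested (hOopen.smul f⁻¹) hHsubO
    refine ⟨f • (interior (V (m + 1)) * H), (isOpen_interior.mul_right).smul f, ?_, ?_, ?_⟩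
    · refine Set.mem_smul_set.2 ⟨1, ?_, by simp⟩
      exact ⟨1, mem_interior_iff_mem_nhds.2 (hVn (m + 1)), 1, hH1, by simp⟩
    · rintro x hx h' hh'
      obtain ⟨y, hy, rfl⟩ := hx
      obtain ⟨a, ha, b, hb, rfl⟩ := hy
      refine Set.mem_smul_set.2 ⟨a * (b * h'), Set.mul_mem_mul ha (hHmul b hb h' hh'), ?_⟩
      simp [smul_eq_mul, mul_assoc]
    · refine lt_of_le_of_lt (measure_mono ?_) hOsmall
      have h1 : interior (V (m + 1)) * H ⊆ V m := by
        rintro x ⟨a, ha, b, hb, rfl⟩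
        exact hVmul m (Set.mul_mem_mul (interior_subset ha) (hHsub (m + 1) hb))
      calc f • (interior (V (m + 1)) * H) ⊆ f • (f⁻¹ • O) := Set.smul_set_mono (h1.trans hm)
      _ = O := smul_inv_smul f O
  choose W hWopen hWmem hWsat hWsmall using rem
  set R : Set G := ⋃ n, ⋃ f ∈ F n, W n f with hRdef
  set E : Set G := K \ R with hEdef
  have hEc : IsCompact E :=
    hKc.diff (isOpen_iUnion fun n => isOpen_biUnion fun f _ => hWopen n f)
  -- measure of the removed set
  have hR : ν R ≤ c := by
    have hstage : ∀ n : ℕ, ν (⋃ f ∈ F n, W n f) ≤ c * 2⁻¹ ^ (n + 1) := by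
      intro n
      refine (measure_biUnion_finset_le (F n) _).trans ?_
      have h1 : ∑ f ∈ F n, ν (W n f) ≤
          ∑ _f ∈ F n, c * 2⁻¹ ^ (n + 1) / ((F n).card + 1) :=
        Finset.sum_le_sum fun f _ => (hWsmall n f).le
      refine h1.trans ?_
      rw [Finset.sum_const, nsmul_eq_mul]
      have h2 : ((F n).card : ENNReal) ≤ ((F n).card : ENNReal) + 1 := le_self_add
      refine (mul_le_mul_left h2 _).trans ?_
      have hne0 : ((F n).card : ENNReal) + 1 ≠ 0 := by simp
      have hnetop : ((F n).card : ENNReal) + 1 ≠ ⊤ :=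
        ENNReal.add_ne_top.2 ⟨ENNReal.natCast_ne_top _, ENNReal.one_ne_top⟩
      rw [ENNReal.mul_div_cancel hne0 hnetop]
    calc ν R ≤ ∑' n, ν (⋃ f ∈ F n, W n f) := measure_iUnion_le _
    _ ≤ ∑' n, c * 2⁻¹ ^ (n + 1) := ENNReal.tsum_le_tsum hstage
    _ = c * ∑' n : ℕ, 2⁻¹ ^ (n + 1) := ENNReal.tsum_mul_left
    _ = c := by
        have hgeo : ∑' n : ℕ, (2⁻¹ : ENNReal) ^ (n + 1) = 1 := by
          have h3 : ∀ n : ℕ, (2⁻¹ : ENNReal) ^ (n + 1) = 2⁻¹ ^ n * 2⁻¹ := fun n => pow_succ _ n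
          rw [tsum_congr h3, ENNReal.tsum_mul_right, ENNReal.tsum_geometric,
            ENNReal.one_sub_inv_two, inv_inv]
          exact ENNReal.mul_inv_cancel (by norm_num) (by norm_num)
        rw [hgeo, mul_one]
  -- positivity of the measure of E
  have hEpos : 0 < ν E := by
    by_contra h0
    push_neg at h0
    have h0' : ν E = 0 := nonpos_iff_eq_zero.1 h0
    have hKle : ν K ≤ ν E + ν R := by
      refine (measure_mono ?_).trans (measure_union_le E R)
      intro x hx
      by_cases hxR : x ∈ R
      · exact Or.inr hxR
      · exact Or.inl ⟨hx, hxR⟩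
    rw [h0', zero_add] at hKle
    exact absurd (hKle.trans hR) (not_le.mpr (ENNReal.half_lt_self hKpos.ne' hKfin))
  -- E is saturated under right multiplication by H
  have hEsat : ∀ x ∈ E, ∀ h' ∈ H, x * h' ∈ E := by
    rintro x ⟨hxK, hxR⟩ h' hh'
    refine ⟨hKs x hxK h' hh', fun hmem => hxR ?_⟩
    simp only [hRdef, Set.mem_iUnion] at hmem ⊢
    obtain ⟨n, f, hf, hx⟩ := hmem
    have := hWsat n f _ hx h'⁻¹ (hHinv h' hh')
    rw [mul_inv_cancel_right] at this
    exact ⟨n, f, hf, this⟩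
  -- E has empty interior
  have hint : interior E = ∅ := by
    by_contra hne
    obtain ⟨x, hx⟩ := Set.nonempty_iff_ne_empty.2 hne
    have hIsat : ∀ h' ∈ H, x * h' ∈ interior E := by
      intro h' hh'
      have hopen : IsOpen ((fun y => y * h') '' interior E) :=
        (Homeomorph.mulRight h').isOpenMap _ isOpen_interior
      have hsub : ((fun y => y * h') '' interior E) ⊆ E := by
        rintro - ⟨y, hy, rfl⟩
        exact hEsat y (interior_subset hy) h' hh'
      exact interior_maximal hsub hopen ⟨x, hx, rfl⟩
    have hHsubO : H ⊆ x⁻¹ • interior E := by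
      intro h' hh'
      rw [Set.mem_smul_set_iff_inv_smul_mem, inv_inv, smul_eq_mul]
      exact hIsat h' hh'
    obtain ⟨m, hm⟩ := hnested (isOpen_interior.smul x⁻¹) hHsubO
    have hxVm : x • V m ⊆ interior E := by
      calc x • V m ⊆ x • (x⁻¹ • interior E) := Set.smul_set_mono hm
      _ = interior E := smul_inv_smul x _
    have hxK : x ∈ K := (interior_subset hx).1
    obtain ⟨f, hfF, hxf⟩ : ∃ f ∈ F (m + 1), x ∈ f • interior (V (m + 1)) := by
      have := hF (m + 1) hxK
      simpa [Set.mem_iUnion] using this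
    obtain ⟨w, hw, hfw⟩ := Set.mem_smul_set.1 hxf
    have hfmem : f ∈ x • V m := by
      refine Set.mem_smul_set.2 ⟨w⁻¹, ?_, ?_⟩
      · refine hVsub m ?_
        rw [← hVsym (m + 1)]
        exact Set.inv_mem_inv.2 (interior_subset hw)
      · rw [smul_eq_mul] at hfw ⊢
        rw [← hfw, mul_assoc, mul_inv_cancel, mul_one]
    have hfE : f ∈ E := interior_subset (hxVm hfmem)
    exact hfE.2 (Set.mem_iUnion.2 ⟨m + 1, Set.mem_iUnion.2 ⟨f, Set.mem_iUnion.2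
      ⟨hfF, hWmem (m + 1) f⟩⟩⟩)
  -- conclude, transferring positivity from ν to μ
  refine ⟨E, hEc, (hEc.isClosed.isNowhereDense_iff).2 hint, ?_⟩
  have htrans := Measure.measure_isMulInvariant_eq_smul_of_isCompact_closure μ ν (s := E)
    (by rw [hEc.isClosed.closure_eq]; exact hEc)
  rw [htrans, ENNReal.smul_def, smul_eq_mul]
  exact ENNReal.mul_pos
    (by exact_mod_cast (Measure.haarScalarFactor_pos_of_isHaarMeasure μ ν).ne')
    hEpos.ne'
end

section
/- Let A be a unital complex Banach algebra and let u ∈ A be power bounded. Then the element v = (1 + u)/2 is power bounded and satisfies lim_{n→∞} ‖v^{n+1} − vⁿ‖ = 0. -/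
open Filter Finset

private def dck (n k : ℕ) : ℤ :=
  (if k = 0 then 0 else (n.choose (k-1) : ℤ)) - (n.choose k : ℤ)

private lemma tele (n j : ℕ) : ∑ k ∈ range (j+1), dck n k = -(n.choose j : ℤ) := by
  have h1 : ∑ k ∈ range (j+1), (if k = 0 then 0 else ((n.choose (k-1) : ℤ)))
      = ∑ k ∈ range j, (n.choose k : ℤ) := by
    rw [Finset.sum_range_succ']
    simp
  have h2 : ∑ k ∈ range (j+1), ((n.choose k : ℤ))
      = (∑ k ∈ range j, (n.choose k : ℤ)) + (n.choose j : ℤ) := Finset.sum_range_succ _ _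
  unfold dck
  rw [Finset.sum_sub_distrib, h1, h2]
  ring

private lemma dck_nonpos {n k : ℕ} (hk : k ≤ n/2) : dck n k ≤ 0 := by
  unfold dck
  rcases Nat.eq_zero_or_pos k with h0 | h0
  · simp [h0]
  · rw [if_neg (by omega)]
    have h' : k - 1 < n/2 := by omega
    have h2 := Nat.choose_le_succ_of_lt_half_left h'
    rw [Nat.sub_add_cancel h0] at h2
    simp only [sub_nonpos]
    exact_mod_cast h2

private lemma dck_nonneg {n k : ℕ} (hk : n/2 < k) : 0 ≤ dck n k := by
  have hk0 : k ≠ 0 := by omega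
  unfold dck
  rw [if_neg hk0, sub_nonneg]
  have : n.choose k ≤ n.choose (k-1) := by
    rcases le_or_gt k n with hkn | hkn
    · have hsymm : n.choose (n - k) = n.choose k := Nat.choose_symm hkn
      rcases lt_or_ge (n-k) (n/2) with hcase | hcase
      · have h2 := Nat.choose_le_succ_of_lt_half_left hcase
        have e : n - k + 1 = n - (k-1) := by omega
        rw [e] at h2
        have hsymm2 : n.choose (n - (k-1)) = n.choose (k-1) := Nat.choose_symm (by omega)
        rw [hsymm2] at h2
        rw [← hsymm]
        exact h2
      · have e : n - k = k - 1 := by omega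
        rw [← hsymm, e]
    · rw [Nat.choose_eq_zero_of_lt hkn]
      exact Nat.zero_le _
  exact_mod_cast this

private lemma abs_sum_dck (n : ℕ) :
    ∑ k ∈ range (n+2), |dck n k| = 2 * (n.choose (n/2) : ℤ) := by
  have hmn : n/2 + 1 ≤ n + 2 := by omega
  have hsplitabs := Finset.sum_Ico_consecutive (f := fun k => |dck n k|)
    (Nat.zero_le (n/2+1)) hmn
  have hsplit := Finset.sum_Ico_consecutive (f := fun k => dck n k)
    (Nat.zero_le (n/2+1)) hmn
  have hA : ∑ k ∈ Finset.Ico 0 (n/2+1), |dck n k| = (n.choose (n/2) : ℤ) := by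
    rw [← Finset.range_eq_Ico]
    have habs : ∀ k ∈ range (n/2+1), |dck n k| = -(dck n k) := fun k hk =>
      abs_of_nonpos (dck_nonpos (Nat.lt_succ_iff.mp (Finset.mem_range.mp hk)))
    rw [Finset.sum_congr rfl habs, Finset.sum_neg_distrib, tele, neg_neg]
  have hB : ∑ k ∈ Finset.Ico (n/2+1) (n+2), |dck n k| = (n.choose (n/2) : ℤ) := by
    have habs : ∀ k ∈ Finset.Ico (n/2+1) (n+2), |dck n k| = dck n k := fun k hk =>
      abs_of_nonneg (dck_nonneg (by have := (Finset.mem_Ico.mp hk).1; omega))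
    rw [Finset.sum_congr rfl habs]
    have h0 : ∑ k ∈ Finset.Ico 0 (n+2), dck n k = 0 := by
      rw [← Finset.range_eq_Ico]
      have ht := tele n (n+1)
      rw [Nat.choose_eq_zero_of_lt (by omega)] at ht
      simpa using ht
    have h1 : ∑ k ∈ Finset.Ico 0 (n/2+1), dck n k = -(n.choose (n/2) : ℤ) := by
      rw [← Finset.range_eq_Ico]; exact tele n (n/2)
    linarith [hsplit, h0, h1]
  rw [Finset.range_eq_Ico, ← hsplitabs, hA, hB]
  ring


private lemma cb_sq (m : ℕ) : (Nat.centralBinom m)^2 * (m+1) ≤ 16^m := by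
  induction m with
  | zero => simp [Nat.centralBinom]
  | succ m ih =>
    have key := Nat.succ_mul_centralBinom_succ m
    have hpos : 0 < (m+1)^3 := by positivity
    apply Nat.le_of_mul_le_mul_left _ hpos
    calc (m+1)^3 * ((Nat.centralBinom (m+1))^2 * (m+1+1))
        = ((m+1) * Nat.centralBinom (m+1))^2 * ((m+2)*(m+1)) := by ring
      _ = (2*(2*m+1))^2 * ((m+2) * (Nat.centralBinom m ^2 * (m+1))) := by rw [key]; ring
      _ ≤ (2*(2*m+1))^2 * ((m+2) * 16^m) := by gcongr
      _ ≤ (16 * (m+1)^3) * 16^m := by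
          have : (2*(2*m+1))^2 * (m+2) ≤ 16 * (m+1)^3 := by nlinarith
          calc (2*(2*m+1))^2 * ((m+2) * 16^m) = ((2*(2*m+1))^2 * (m+2)) * 16^m := by ring
            _ ≤ (16 * (m+1)^3) * 16^m := Nat.mul_le_mul_right _ this
      _ = (m+1)^3 * 16^(m+1) := by ring

private lemma choose_half_sq (n : ℕ) : (n.choose (n/2))^2 * (n+1) ≤ 2 * 4^n := by
  have h16 : ∀ m : ℕ, (4:ℕ)^(2*m) = 16^m := by
    intro m; rw [pow_mul]; norm_num
  rcases Nat.even_or_odd n with ⟨m, hm⟩ | ⟨m, hm⟩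
  · have hn : n = 2*m := by omega
    subst hn
    have hhalf : 2*m/2 = m := by omega
    rw [hhalf, h16]
    have := cb_sq m
    have hcb : Nat.centralBinom m = (2*m).choose m := rfl
    calc ((2*m).choose m)^2 * (2*m+1) ≤ ((2*m).choose m)^2 * (2*(m+1)) := by
          apply Nat.mul_le_mul_left; omega
      _ = 2 * ((Nat.centralBinom m)^2 * (m+1)) := by rw [hcb]; ring
      _ ≤ 2 * 16^m := by gcongr
  · have hn : n = 2*m+1 := by omega
    subst hn
    have hhalf : (2*m+1)/2 = m := by omega
    rw [hhalf]
    have hd : 2 * ((2*m+1).choose m) = Nat.centralBinom (m+1) := by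
      have h1 : (2*m+1).choose (m+1) = (2*m+1).choose m := by
        rw [← Nat.choose_symm (show m+1 ≤ 2*m+1 by omega)]
        congr 1
        omega
      have h2 : Nat.centralBinom (m+1) = (2*m+2).choose (m+1) := by
        unfold Nat.centralBinom
        congr 1
      rw [h2, show 2*m+2 = (2*m+1)+1 by ring, Nat.choose_succ_succ, h1]
      ring
    have hcb := cb_sq (m+1)
    have hkey : 2 * (((2*m+1).choose m)^2 * (2*m+1+1)) ≤ 2 * (2 * 4^(2*m+1)) := by
      calc 2 * (((2*m+1).choose m)^2 * (2*m+1+1))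
          = (2 * ((2*m+1).choose m))^2 * (m+1) := by ring
        _ ≤ (2 * ((2*m+1).choose m))^2 * (m+1+1) := by apply Nat.mul_le_mul_left; omega
        _ = (Nat.centralBinom (m+1))^2 * (m+1+1) := by rw [hd]
        _ ≤ 16^(m+1) := hcb
        _ = 2 * (2 * 4^(2*m+1)) := by
            rw [pow_succ, pow_succ, h16 m]
            ring
    omega

private lemma sqrt_bound (n : ℕ) :
    (n.choose (n/2) : ℝ) ≤ 2^n * (Real.sqrt 2 / Real.sqrt (n+1)) := by
  have h := choose_half_sq n
  have hcast : ((n.choose (n/2) : ℝ))^2 * ((n:ℝ)+1) ≤ 2 * 4^n := by exact_mod_cast h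
  have hn1 : (0:ℝ) < (n:ℝ) + 1 := by positivity
  have hR : (0:ℝ) ≤ 2^n * (Real.sqrt 2 / Real.sqrt (n+1)) := by positivity
  have hsq : ((n.choose (n/2) : ℝ))^2 ≤ (2^n * (Real.sqrt 2 / Real.sqrt (n+1)))^2 := by
    have e : (2^n * (Real.sqrt 2 / Real.sqrt ((n:ℝ)+1)))^2 = 4^n * (2 / ((n:ℝ)+1)) := by
      rw [mul_pow, div_pow, Real.sq_sqrt (by norm_num : (0:ℝ) ≤ 2),
        Real.sq_sqrt hn1.le, ← pow_mul, show n * 2 = 2 * n by ring, pow_mul]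
      norm_num
    rw [e, show (4:ℝ)^n * (2/((n:ℝ)+1)) = (2*4^n)/((n:ℝ)+1) by ring,
      le_div_iff₀ hn1]
    exact hcast
  calc (n.choose (n/2) : ℝ) = Real.sqrt (((n.choose (n/2) : ℝ))^2) := by
        rw [Real.sqrt_sq (by positivity)]
    _ ≤ Real.sqrt ((2^n * (Real.sqrt 2 / Real.sqrt (n+1)))^2) := Real.sqrt_le_sqrt hsq
    _ = 2^n * (Real.sqrt 2 / Real.sqrt (n+1)) := Real.sqrt_sq hR

section Algebra
variable {A : Type*} [NormedRing A] [NormedAlgebra ℂ A]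

private lemma one_add_pow (u : A) (n : ℕ) :
    (1 + u)^n = ∑ k ∈ range (n+1), ((n.choose k : ℂ)) • u^k := by
  rw [add_comm, (Commute.one_right u).add_pow]
  refine Finset.sum_congr rfl fun k _ => ?_
  rw [one_pow, mul_one]
  rw [show ((n.choose k : ℂ)) • u^k = ((n.choose k : ℕ)) • u^k from
    Nat.cast_smul_eq_nsmul ℂ _ _, nsmul_eq_mul, (Nat.cast_commute (n.choose k) (u^k)).eq]

private lemma expand_diff (u : A) (n : ℕ) :
    (1 + u)^n * (u - 1) = ∑ k ∈ range (n+2), (((dck n k : ℤ)) : ℂ) • u^k := by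
  have h1 : ∑ k ∈ range (n+2), (((if k = 0 then (0:ℤ) else (n.choose (k-1) : ℤ)) : ℂ)) • u^k
      = ∑ k ∈ range (n+1), ((n.choose k : ℂ)) • u^(k+1) := by
    rw [Finset.sum_range_succ']
    simp
  have h2 : ∑ k ∈ range (n+2), ((n.choose k : ℂ)) • u^k
      = ∑ k ∈ range (n+1), ((n.choose k : ℂ)) • u^k := by
    rw [Finset.sum_range_succ]
    simp [Nat.choose_succ_self]
  have hrhs : ∑ k ∈ range (n+2), (((dck n k : ℤ)) : ℂ) • u^k
      = (∑ k ∈ range (n+1), ((n.choose k : ℂ)) • u^(k+1))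
        - ∑ k ∈ range (n+1), ((n.choose k : ℂ)) • u^k := by
    rw [← h1, ← h2, ← Finset.sum_sub_distrib]
    refine Finset.sum_congr rfl fun k _ => ?_
    unfold dck
    push_cast
    rw [sub_smul]
  rw [hrhs, one_add_pow, mul_sub, mul_one, Finset.sum_mul]
  congr 1
  refine Finset.sum_congr rfl fun k _ => ?_
  rw [smul_mul_assoc, ← pow_succ]

private lemma norm_expand_le (u : A) {C : ℝ} (hC : ∀ k, ‖u^k‖ ≤ C) (n : ℕ) :
    ‖(1 + u)^n * (u - 1)‖ ≤ C * (2 * (n.choose (n/2) : ℝ)) := by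
  rw [expand_diff]
  calc ‖∑ k ∈ range (n+2), (((dck n k : ℤ)) : ℂ) • u^k‖
      ≤ ∑ k ∈ range (n+2), ‖(((dck n k : ℤ)) : ℂ) • u^k‖ := norm_sum_le _ _
    _ = ∑ k ∈ range (n+2), ((|dck n k| : ℤ) : ℝ) * ‖u^k‖ := by
        refine Finset.sum_congr rfl fun k _ => ?_
        rw [norm_smul]
        push_cast
        simp
    _ ≤ ∑ k ∈ range (n+2), ((|dck n k| : ℤ) : ℝ) * C := by
        refine Finset.sum_le_sum fun k _ => ?_
        have h0 : (0:ℝ) ≤ ((|dck n k| : ℤ) : ℝ) := by positivity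
        exact mul_le_mul_of_nonneg_left (hC k) h0
    _ = (∑ k ∈ range (n+2), ((|dck n k| : ℤ) : ℝ)) * C := by rw [← Finset.sum_mul]
    _ = C * (2 * (n.choose (n/2) : ℝ)) := by
        have hc : (∑ k ∈ range (n+2), ((|dck n k| : ℤ) : ℝ)) = 2 * (n.choose (n/2) : ℝ) := by
          exact_mod_cast congrArg (Int.cast : ℤ → ℝ) (abs_sum_dck n)
        rw [hc]; ring
end Algebra

/-- If `u` is a power bounded element of a unital complex Banach algebra, then
`v = (1 + u)/2` is power bounded and `‖v^(n+1) - v^n‖ → 0`. -/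
theorem stmt_9 {A : Type*} [NormedRing A] [NormedAlgebra ℂ A] [CompleteSpace A]
    (u : A) (h : ∃ C : ℝ, ∀ n : ℕ, ‖u ^ n‖ ≤ C) :
    (∃ C : ℝ, ∀ n : ℕ, ‖(((2 : ℂ)⁻¹) • (1 + u)) ^ n‖ ≤ C) ∧
    Tendsto (fun n : ℕ =>
        ‖(((2 : ℂ)⁻¹) • (1 + u)) ^ (n + 1) - (((2 : ℂ)⁻¹) • (1 + u)) ^ n‖)
      atTop (nhds 0) := by
  obtain ⟨C, hC⟩ := h
  have hC0 : 0 ≤ C := le_trans (norm_nonneg _) (hC 0)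
  set v : A := ((2 : ℂ)⁻¹) • (1 + u) with hv
  have hvpow : ∀ n : ℕ, v ^ n = (((2:ℂ)⁻¹)^n) • (1 + u)^n := fun n => smul_pow _ _ _
  have hnorm2 : ∀ n : ℕ, ‖(((2:ℂ)⁻¹)^n)‖ = ((2:ℝ)⁻¹)^n := by
    intro n
    rw [norm_pow, norm_inv]
    norm_num
  constructor
  · refine ⟨C, fun n => ?_⟩
    rw [hvpow n, norm_smul, hnorm2, one_add_pow]
    have hb : ‖∑ k ∈ range (n+1), ((n.choose k : ℂ)) • u^k‖ ≤ 2^n * C := by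
      calc ‖∑ k ∈ range (n+1), ((n.choose k : ℂ)) • u^k‖
          ≤ ∑ k ∈ range (n+1), ‖((n.choose k : ℂ)) • u^k‖ := norm_sum_le _ _
        _ ≤ ∑ k ∈ range (n+1), (n.choose k : ℝ) * C := by
            refine Finset.sum_le_sum fun k _ => ?_
            rw [norm_smul]
            have h1 : ‖((n.choose k : ℂ))‖ = (n.choose k : ℝ) := by
              rw [Complex.norm_natCast]
            rw [h1]
            exact mul_le_mul_of_nonneg_left (hC k) (by positivity)
        _ = (∑ k ∈ range (n+1), (n.choose k : ℝ)) * C := by rw [← Finset.sum_mul]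
        _ = 2^n * C := by
            have := Nat.sum_range_choose n
            have hcast : (∑ k ∈ range (n+1), (n.choose k : ℝ)) = (2:ℝ)^n := by
              exact_mod_cast congrArg (Nat.cast : ℕ → ℝ) this
            rw [hcast]
    calc ((2:ℝ)⁻¹)^n * ‖∑ k ∈ range (n+1), ((n.choose k : ℂ)) • u^k‖
        ≤ ((2:ℝ)⁻¹)^n * (2^n * C) := by
          exact mul_le_mul_of_nonneg_left hb (by positivity)
      _ = C := by
          rw [← mul_assoc, ← mul_pow]
          norm_num
  · have hdiff : ∀ n : ℕ, v^(n+1) - v^n = (((2:ℂ)⁻¹)^(n+1)) • ((1 + u)^n * (u - 1)) := by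
      intro n
      have hv1 : v - 1 = ((2:ℂ)⁻¹) • (u - 1) := by
        rw [hv]
        module
      calc v^(n+1) - v^n = v^n * (v - 1) := by
            rw [mul_sub, mul_one, ← pow_succ]
        _ = ((((2:ℂ)⁻¹)^n) • (1 + u)^n) * (((2:ℂ)⁻¹) • (u - 1)) := by rw [hvpow, hv1]
        _ = (((2:ℂ)⁻¹)^(n+1)) • ((1 + u)^n * (u - 1)) := by
            rw [smul_mul_smul_comm, pow_succ]
    have hbound : ∀ n : ℕ, ‖v^(n+1) - v^n‖ ≤ (C * Real.sqrt 2) * (Real.sqrt (n+1))⁻¹ := by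
      intro n
      rw [hdiff n, norm_smul, hnorm2]
      have h2n : (0:ℝ) < 2^n := by positivity
      calc ((2:ℝ)⁻¹)^(n+1) * ‖(1 + u)^n * (u - 1)‖
          ≤ ((2:ℝ)⁻¹)^(n+1) * (C * (2 * (n.choose (n/2) : ℝ))) :=
            mul_le_mul_of_nonneg_left (norm_expand_le u hC n) (by positivity)
        _ = C * ((n.choose (n/2) : ℝ) / 2^n) := by
            rw [pow_succ]
            field_simp
            have h12 : ((1:ℝ)/2)^n * 2^n = 1 := by rw [← mul_pow]; norm_num
            linear_combination (C * (n.choose (n/2) : ℝ)) * h12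
        _ ≤ C * ((2^n * (Real.sqrt 2 / Real.sqrt (n+1))) / 2^n) := by
            have hs := sqrt_bound n
            gcongr
        _ = (C * Real.sqrt 2) * (Real.sqrt (n+1))⁻¹ := by
            field_simp
    apply squeeze_zero (fun n => norm_nonneg _) hbound
    have hsqrt_top : Tendsto (fun n : ℕ => Real.sqrt ((n:ℝ)+1)) atTop atTop := by
      apply Filter.tendsto_atTop_atTop.mpr
      intro b
      refine ⟨⌈b^2⌉₊, fun n hn => ?_⟩
      have hb : b ≤ Real.sqrt (b^2) := by
        rw [Real.sqrt_sq_eq_abs]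
        exact le_abs_self b
      refine hb.trans (Real.sqrt_le_sqrt ?_)
      have h1 : (b^2 : ℝ) ≤ (⌈b^2⌉₊ : ℝ) := Nat.le_ceil _
      have h2 : ((⌈b^2⌉₊ : ℕ) : ℝ) ≤ (n : ℝ) := by exact_mod_cast hn
      linarith
    have := (tendsto_inv_atTop_zero.comp hsqrt_top).const_mul (C * Real.sqrt 2)
    simpa using this
end

section
/- Let A be a commutative complex Banach function algebra on a set X, closed under complex conjugation, such that ‖ū‖ = ‖u‖ for all u ∈ A, and such that |u| ∈ A whenever u ∈ A. If u ∈ A is power bounded, then |u| is power bounded. -/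
/-- Let `A` be a commutative complex Banach algebra of functions on a set `X`
(realized via an injective algebra homomorphism `ι : A →ₐ[ℂ] (X → ℂ)`), closed under
complex conjugation with `‖ū‖ = ‖u‖`, and closed under pointwise absolute value.
If `u ∈ A` is power bounded, then so is `|u|`. -/
theorem stmt_10 {X A : Type*} [NormedCommRing A] [NormedAlgebra ℂ A] [CompleteSpace A]
    (ι : A →ₐ[ℂ] (X → ℂ)) (hι : Function.Injective ι)
    (conj : A → A) (hconj : ∀ a : A, ι (conj a) = fun x => (starRingEnd ℂ) (ι a x))
    (hconj_norm : ∀ a : A, ‖conj a‖ = ‖a‖)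
    (abs : A → A) (habs : ∀ a : A, ι (abs a) = fun x => (‖ι a x‖ : ℂ))
    (u : A) (hu : ∃ C : ℝ, ∀ n : ℕ, ‖u ^ n‖ ≤ C) :
    ∃ C : ℝ, ∀ n : ℕ, ‖(abs u) ^ n‖ ≤ C := by
  obtain ⟨C, hC⟩ := hu
  have hC0 : 0 ≤ C := le_trans (norm_nonneg _) (hC 0)
  have hsq : abs u ^ 2 = u * conj u := by
    apply hι
    rw [map_pow, map_mul, habs, hconj]
    funext x
    simp only [Pi.pow_apply, Pi.mul_apply]
    rw [← Complex.ofReal_pow, Complex.sq_norm, Complex.mul_conj]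
  have hcpow : ∀ n : ℕ, (conj u) ^ n = conj (u ^ n) := by
    intro n
    apply hι
    rw [map_pow, hconj, hconj, map_pow]
    funext x
    simp [Pi.pow_apply, map_pow]
  have heven : ∀ n : ℕ, ‖abs u ^ (2 * n)‖ ≤ C ^ 2 := by
    intro n
    calc ‖abs u ^ (2 * n)‖ = ‖u ^ n * (conj u) ^ n‖ := by
          rw [pow_mul, hsq, mul_pow]
      _ ≤ ‖u ^ n‖ * ‖(conj u) ^ n‖ := norm_mul_le _ _
      _ ≤ C * C := by
          refine mul_le_mul (hC n) ?_ (norm_nonneg _) hC0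
          rw [hcpow, hconj_norm]; exact hC n
      _ = C ^ 2 := (sq C).symm
  refine ⟨C ^ 2 * max 1 ‖abs u‖, fun n => ?_⟩
  rcases Nat.even_or_odd n with ⟨k, hk⟩ | ⟨k, hk⟩
  · calc ‖abs u ^ n‖ ≤ C ^ 2 := by rw [hk, ← two_mul]; exact heven k
      _ = C ^ 2 * 1 := (mul_one _).symm
      _ ≤ C ^ 2 * max 1 ‖abs u‖ := by
          exact mul_le_mul_of_nonneg_left (le_max_left _ _) (sq_nonneg C)
  · calc ‖abs u ^ n‖ = ‖abs u ^ (2 * k) * abs u‖ := by rw [hk, pow_succ]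
      _ ≤ ‖abs u ^ (2 * k)‖ * ‖abs u‖ := norm_mul_le _ _
      _ ≤ C ^ 2 * max 1 ‖abs u‖ := by
          exact mul_le_mul (heven k) (le_max_right _ _) (norm_nonneg _) (sq_nonneg C)
end
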